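/- If A, B are positive definite matrices with A ♮_t B ≤ I in the Löwner order, then A ♯_t B ≤ I, for all t ∈ [0,1]. -/

import Mathlib

open Matrix
open scoped ComplexOrder

noncomputable def mpow {m : Type*} [Fintype m] [DecidableEq m]
    (A : Matrix m m ℂ) (t : ℝ) : Matrix m m ℂ :=
  if h : A.IsHermitian then
    (h.eigenvectorUnitary : Matrix m m ℂ) *
      Matrix.diagonal (fun i => ((h.eigenvalues i ^ t : ℝ) : ℂ)) *
      star (h.eigenvectorUnitary : Matrix m m ℂ)
  else A

section Helpers
variable {m : Type*} [Fintype m] [DecidableEq m]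

lemma mpow_eq_cfc (A : Matrix m m ℂ) (hA : A.IsHermitian) (t : ℝ) :
    mpow A t = cfc (fun x : ℝ => x ^ t) A := by
  rw [hA.cfc_eq]; rw [mpow, dif_pos hA]; rfl

lemma continuousOn_finite (f : ℝ → ℝ) (A : Matrix m m ℂ) :
    ContinuousOn f (spectrum ℝ A) :=
  (Matrix.finite_real_spectrum (A := A)).continuousOn f

lemma spectrum_pos_of_posDef {A : Matrix m m ℂ} (hA : A.PosDef) {x : ℝ}
    (hx : x ∈ spectrum ℝ A) : 0 < x := by
  rw [hA.isHermitian.spectrum_real_eq_range_eigenvalues] at hx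
  obtain ⟨i, rfl⟩ := hx
  exact hA.eigenvalues_pos i

lemma mpow_add {A : Matrix m m ℂ} (hA : A.PosDef) (s t : ℝ) :
    mpow A s * mpow A t = mpow A (s + t) := by
  have h := hA.isHermitian
  rw [mpow_eq_cfc A h, mpow_eq_cfc A h, mpow_eq_cfc A h, ← cfc_mul _ _ A
    (continuousOn_finite _ A) (continuousOn_finite _ A)]
  exact cfc_congr fun x hx => (Real.rpow_add (spectrum_pos_of_posDef hA hx) s t).symm

lemma mpow_zero {A : Matrix m m ℂ} (hA : A.IsHermitian) : mpow A 0 = 1 := by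
  rw [mpow_eq_cfc A hA]
  calc cfc (fun x : ℝ => x ^ (0:ℝ)) A = cfc (fun _ : ℝ => (1:ℝ)) A := by
        simp [Real.rpow_zero]
    _ = 1 := cfc_const_one ℝ A hA.isSelfAdjoint

lemma mpow_one {A : Matrix m m ℂ} (hA : A.IsHermitian) : mpow A 1 = A := by
  rw [mpow_eq_cfc A hA]
  simpa [Real.rpow_one] using cfc_id' ℝ A hA.isSelfAdjoint

lemma isHermitian_mpow {A : Matrix m m ℂ} (hA : A.IsHermitian) (t : ℝ) :
    (mpow A t).IsHermitian := by
  rw [mpow_eq_cfc A hA]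
  exact cfc_predicate _ A

lemma conj_diag_posSemidef (U : Matrix m m ℂ) (hU : U ∈ unitary (Matrix m m ℂ))
    (d : m → ℝ) (hd : ∀ i, 0 ≤ d i) :
    (U * Matrix.diagonal (fun i => (d i : ℂ)) * star U).PosSemidef := by
  have : (Matrix.diagonal (fun i => (d i : ℂ))).PosSemidef :=
    Matrix.posSemidef_diagonal_iff.mpr fun i => by
      simpa using Complex.zero_le_real.mpr (hd i)
  simpa [Matrix.star_eq_conjTranspose] using this.mul_mul_conjTranspose_same U

lemma conj_diag_posDef (U : Matrix m m ℂ) (hU : U ∈ unitary (Matrix m m ℂ))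
    (d : m → ℝ) (hd : ∀ i, 0 < d i) :
    (U * Matrix.diagonal (fun i => (d i : ℂ)) * star U).PosDef := by
  have hdiag : (Matrix.diagonal (fun i => (d i : ℂ))).PosDef := by
    rw [Matrix.posDef_diagonal_iff]
    intro i; simpa using Complex.zero_lt_real.mpr (hd i)
  refine Matrix.PosDef.of_dotProduct_mulVec_pos ?_ ?_
  · have := (conj_diag_posSemidef U hU d (fun i => (hd i).le)).isHermitian
    exact this
  · intro x hx
    have hy : star U *ᵥ x ≠ 0 := by
      intro h0
      apply hx
      have := congrArg (fun v => U *ᵥ v) h0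
      simpa [Matrix.mulVec_mulVec, Unitary.mul_star_self_of_mem hU] using this
    have key : star x ⬝ᵥ (U * Matrix.diagonal (fun i => (d i : ℂ)) * star U) *ᵥ x
        = star (star U *ᵥ x) ⬝ᵥ (Matrix.diagonal (fun i => (d i : ℂ))) *ᵥ (star U *ᵥ x) := by
      rw [← Matrix.mulVec_mulVec, ← Matrix.mulVec_mulVec, Matrix.dotProduct_mulVec (star x) U,
        Matrix.star_mulVec, Matrix.star_eq_conjTranspose, Matrix.conjTranspose_conjTranspose]
    rw [key]
    exact hdiag.dotProduct_mulVec_pos hy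

lemma mpow_posDef {A : Matrix m m ℂ} (hA : A.PosDef) (t : ℝ) : (mpow A t).PosDef := by
  have h := hA.isHermitian
  rw [mpow, dif_pos h]
  exact conj_diag_posDef _ (h.eigenvectorUnitary).2 _
    (fun i => Real.rpow_pos_of_pos (hA.eigenvalues_pos i) t)

lemma mpow_inv {A : Matrix m m ℂ} (hA : A.PosDef) (t : ℝ) :
    (mpow A t)⁻¹ = mpow A (-t) := by
  have : mpow A t * mpow A (-t) = 1 := by
    rw [mpow_add hA]; simp [mpow_zero hA.isHermitian]
  exact (Matrix.inv_eq_right_inv this)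

lemma mpow_mpow {A : Matrix m m ℂ} (hA : A.PosDef) (s t : ℝ) :
    mpow (mpow A s) t = mpow A (s * t) := by
  have h := hA.isHermitian
  rw [mpow_eq_cfc A h, mpow_eq_cfc _ (by rw [← mpow_eq_cfc A h]; exact isHermitian_mpow h s),
    ← cfc_comp' _ _ A (by exact (Set.Finite.continuousOn (Set.Finite.image _ (Matrix.finite_real_spectrum)) _)) (continuousOn_finite _ A),
    mpow_eq_cfc A h]
  exact cfc_congr fun x hx =>
    (Real.rpow_mul (le_of_lt (spectrum_pos_of_posDef hA hx)) s t).symm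

lemma posDef_conj {B K : Matrix m m ℂ} (hB : B.PosDef) (hK : K.PosDef) :
    (K * B * K).PosDef := by
  have hKH : Kᴴ = K := hK.isHermitian
  refine Matrix.PosDef.of_dotProduct_mulVec_pos ?_ ?_
  · have : (K * B * K)ᴴ = Kᴴ * Bᴴ * Kᴴ := by
      rw [Matrix.conjTranspose_mul, Matrix.conjTranspose_mul, mul_assoc]
    rw [Matrix.IsHermitian, this, hKH, hB.isHermitian]
  · intro x hx
    have hdet : IsUnit K.det := hK.det_pos.ne'.isUnit
    have hy : K *ᵥ x ≠ 0 := by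
      intro h0
      apply hx
      have := congrArg (fun v => K⁻¹ *ᵥ v) h0
      simpa [Matrix.mulVec_mulVec, Matrix.nonsing_inv_mul K hdet] using this
    have key : star x ⬝ᵥ (K * B * K) *ᵥ x = star (K *ᵥ x) ⬝ᵥ B *ᵥ (K *ᵥ x) := by
      rw [← Matrix.mulVec_mulVec, ← Matrix.mulVec_mulVec, Matrix.dotProduct_mulVec (star x) K,
        Matrix.star_mulVec, hKH]
    rw [key]
    exact hB.dotProduct_mulVec_pos hy

lemma loewner_conj {M N : Matrix m m ℂ} (h : (N - M).PosSemidef) (K : Matrix m m ℂ) :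
    (Kᴴ * N * K - Kᴴ * M * K).PosSemidef := by
  have := h.conjTranspose_mul_mul_same K
  have e : Kᴴ * (N - M) * K = Kᴴ * N * K - Kᴴ * M * K := by
    rw [Matrix.mul_sub, Matrix.sub_mul]
  rwa [e] at this

lemma npow_mul_comm_aux (X : Matrix m m ℂ) (k : ℕ) :
    (X * Xᴴ) ^ k * X = X * (Xᴴ * X) ^ k := by
  induction k with
  | zero => simp
  | succ k ih =>
      rw [pow_succ, pow_succ, mul_assoc _ _ X, mul_assoc X Xᴴ X, ← mul_assoc _ X (Xᴴ * X),
        ih, mul_assoc]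

lemma aeval_mul_comm (X : Matrix m m ℂ) (p : Polynomial ℝ) :
    (Polynomial.aeval (X * Xᴴ) p) * X = X * Polynomial.aeval (Xᴴ * X) p := by
  induction p using Polynomial.induction_on' with
  | add p q hp hq => simp [add_mul, mul_add, hp, hq]
  | monomial n a =>
      simp only [Polynomial.aeval_monomial]
      rw [mul_assoc, npow_mul_comm_aux, ← mul_assoc, Algebra.commutes a X, mul_assoc]

lemma mpow_mul_comm (X : Matrix m m ℂ) (t : ℝ) :
    mpow (X * Xᴴ) t * X = X * mpow (Xᴴ * X) t := by
  have hP : (X * Xᴴ).IsHermitian := Matrix.isHermitian_mul_conjTranspose_self X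
  have hQ : (Xᴴ * X).IsHermitian := by simpa using Matrix.isHermitian_mul_conjTranspose_self Xᴴ
  set s : Finset ℝ := (Matrix.finite_real_spectrum (A := X * Xᴴ)).toFinset ∪
      (Matrix.finite_real_spectrum (A := Xᴴ * X)).toFinset with hs
  set p := Lagrange.interpolate s id (fun x : ℝ => x ^ t) with hp
  have hinj : Set.InjOn (id : ℝ → ℝ) s := Function.injective_id.injOn
  have h1 : mpow (X * Xᴴ) t = Polynomial.aeval (X * Xᴴ) p := by
    rw [mpow_eq_cfc _ hP, ← cfc_polynomial p (X * Xᴴ) hP.isSelfAdjoint]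
    apply cfc_congr
    intro x hx
    simpa [hp] using (Lagrange.eval_interpolate_at_node (fun x : ℝ => x ^ t) hinj
      (Finset.mem_union_left _ ((Matrix.finite_real_spectrum).mem_toFinset.mpr hx))).symm
  have h2 : mpow (Xᴴ * X) t = Polynomial.aeval (Xᴴ * X) p := by
    rw [mpow_eq_cfc _ hQ, ← cfc_polynomial p (Xᴴ * X) hQ.isSelfAdjoint]
    apply cfc_congr
    intro x hx
    simpa [hp] using (Lagrange.eval_interpolate_at_node (fun x : ℝ => x ^ t) hinj
      (Finset.mem_union_right _ ((Matrix.finite_real_spectrum).mem_toFinset.mpr hx))).symm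
  rw [h1, h2, aeval_mul_comm]

lemma unitary_conj_one {U : Matrix m m ℂ} (hU : U ∈ unitary (Matrix m m ℂ)) :
    U * Matrix.diagonal (fun _ : m => (1:ℂ)) * star U = 1 := by
  rw [Matrix.diagonal_one, mul_one, Unitary.mul_star_self_of_mem hU]

lemma one_sub_psd_of_eig_le_one {G : Matrix m m ℂ} (hG : G.IsHermitian)
    (h : ∀ i, hG.eigenvalues i ≤ 1) : (1 - G).PosSemidef := by
  have hps := conj_diag_posSemidef (hG.eigenvectorUnitary : Matrix m m ℂ)
    hG.eigenvectorUnitary.2 (fun i => 1 - hG.eigenvalues i) (fun i => sub_nonneg.mpr (h i))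
  have key : (hG.eigenvectorUnitary : Matrix m m ℂ) *
      Matrix.diagonal (fun i => ((1 - hG.eigenvalues i : ℝ) : ℂ)) *
      star (hG.eigenvectorUnitary : Matrix m m ℂ) = 1 - G := by
    have hd : Matrix.diagonal (fun i => ((1 - hG.eigenvalues i : ℝ) : ℂ)) =
        Matrix.diagonal (fun _ : m => (1:ℂ)) -
        Matrix.diagonal (fun i => ((hG.eigenvalues i : ℝ) : ℂ)) := by
      ext i j
      by_cases hij : i = j
      · subst hij; simp
      · simp [Matrix.diagonal_apply_ne _ hij, Matrix.one_apply_ne hij]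
    rw [hd, Matrix.mul_sub, Matrix.sub_mul, unitary_conj_one hG.eigenvectorUnitary.2]
    conv_rhs => rw [hG.spectral_theorem]
    rfl
  rwa [key] at hps

lemma sub_one_psd_of_one_le_eig {G : Matrix m m ℂ} (hG : G.IsHermitian)
    (h : ∀ i, 1 ≤ hG.eigenvalues i) : (G - 1).PosSemidef := by
  have hps := conj_diag_posSemidef (hG.eigenvectorUnitary : Matrix m m ℂ)
    hG.eigenvectorUnitary.2 (fun i => hG.eigenvalues i - 1) (fun i => sub_nonneg.mpr (h i))
  have key : (hG.eigenvectorUnitary : Matrix m m ℂ) *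
      Matrix.diagonal (fun i => ((hG.eigenvalues i - 1 : ℝ) : ℂ)) *
      star (hG.eigenvectorUnitary : Matrix m m ℂ) = G - 1 := by
    have hd : Matrix.diagonal (fun i => ((hG.eigenvalues i - 1 : ℝ) : ℂ)) =
        Matrix.diagonal (fun i => ((hG.eigenvalues i : ℝ) : ℂ)) -
        Matrix.diagonal (fun _ : m => (1:ℂ)) := by
      ext i j
      by_cases hij : i = j
      · subst hij; simp
      · simp [Matrix.diagonal_apply_ne _ hij, Matrix.one_apply_ne hij]
    rw [hd, Matrix.mul_sub, Matrix.sub_mul, unitary_conj_one hG.eigenvectorUnitary.2]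
    conv_rhs => rw [hG.spectral_theorem]
    rfl
  rwa [key] at hps

lemma eig_le_one_of_one_sub_psd {G : Matrix m m ℂ} (hG : G.IsHermitian)
    (h : (1 - G).PosSemidef) (i : m) : hG.eigenvalues i ≤ 1 := by
  set v : m → ℂ := ⇑(hG.eigenvectorBasis i) with hv
  have hvne : v ≠ 0 := by
    intro h0
    have hz : (hG.eigenvectorBasis i : EuclideanSpace ℂ m) = 0 := by
      ext j; exact congrFun h0 j
    have hn := hG.eigenvectorBasis.orthonormal.1 i
    rw [hz] at hn
    simp at hn
  have hpos : 0 < star v ⬝ᵥ v := Matrix.dotProduct_star_self_pos_iff.mpr hvne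
  have heig : G *ᵥ v = (hG.eigenvalues i : ℂ) • v := by
    have := hG.mulVec_eigenvectorBasis i
    rw [hv]
    convert this using 1
    ext j; simp
  have h2 := h.dotProduct_mulVec_nonneg v
  rw [Matrix.sub_mulVec, Matrix.one_mulVec, dotProduct_sub, heig,
    dotProduct_smul] at h2
  have hre := (Complex.le_def.mp h2).1
  have hcre : 0 < (star v ⬝ᵥ v).re := (Complex.lt_def.mp hpos).1
  have him : (star v ⬝ᵥ v).im = 0 := ((Complex.lt_def.mp hpos).2).symm
  simp only [smul_eq_mul, Complex.sub_re, Complex.mul_re, Complex.ofReal_re, Complex.ofReal_im, him,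
    Complex.zero_re, mul_zero, zero_mul, sub_zero] at hre
  nlinarith

lemma contraction_dot {X : Matrix m m ℂ} (h : (1 - Xᴴ * X).PosSemidef) (v : m → ℂ) :
    star (X *ᵥ v) ⬝ᵥ (X *ᵥ v) ≤ star v ⬝ᵥ v := by
  have h2 := h.dotProduct_mulVec_nonneg v
  rw [Matrix.sub_mulVec, Matrix.one_mulVec, dotProduct_sub] at h2
  have key : star v ⬝ᵥ (Xᴴ * X) *ᵥ v = star (X *ᵥ v) ⬝ᵥ (X *ᵥ v) := by
    rw [← Matrix.mulVec_mulVec, Matrix.dotProduct_mulVec (star v) Xᴴ, Matrix.star_mulVec]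
  rw [key] at h2
  exact sub_nonneg.mp h2

lemma mpow_neg_one {A : Matrix m m ℂ} (hA : A.PosDef) : mpow A (-1) = A⁻¹ := by
  rw [← mpow_inv hA 1, mpow_one hA.isHermitian]

lemma conj_diag_sub (U : Matrix m m ℂ) (f g : m → ℝ) :
    U * Matrix.diagonal (fun i => ((f i : ℝ) : ℂ)) * star U -
      U * Matrix.diagonal (fun i => ((g i : ℝ) : ℂ)) * star U =
    U * Matrix.diagonal (fun i => ((f i - g i : ℝ) : ℂ)) * star U := by
  rw [← Matrix.sub_mul, ← Matrix.mul_sub]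
  congr 2
  ext i j
  by_cases hij : i = j
  · subst hij; simp
  · simp [Matrix.diagonal_apply_ne _ hij]

lemma psd_inv_sub_one {G : Matrix m m ℂ} (hG : G.PosDef) (h1 : (1 - G).PosSemidef) :
    (G⁻¹ - 1).PosSemidef := by
  have hH := hG.isHermitian
  have heig := fun i => eig_le_one_of_one_sub_psd hH h1 i
  have heigpos := fun i => hG.eigenvalues_pos i
  rw [← mpow_neg_one hG, mpow, dif_pos hH]
  have h1eq : (1 : Matrix m m ℂ) = (hH.eigenvectorUnitary : Matrix m m ℂ) *
      Matrix.diagonal (fun i => (((1:ℝ) : ℝ) : ℂ)) * star (hH.eigenvectorUnitary : Matrix m m ℂ) :=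
    (unitary_conj_one hH.eigenvectorUnitary.2).symm
  rw [h1eq, conj_diag_sub]
  exact conj_diag_posSemidef _ hH.eigenvectorUnitary.2 _ (fun i => by
    have : hH.eigenvalues i ^ (-1:ℝ) = (hH.eigenvalues i)⁻¹ := Real.rpow_neg_one _
    rw [this]
    have hx := heigpos i
    have hc : hH.eigenvalues i * (hH.eigenvalues i)⁻¹ = 1 := mul_inv_cancel₀ hx.ne'
    nlinarith [heig i, hx, hc, inv_nonneg.mpr hx.le])

lemma inv_antitone {P Q : Matrix m m ℂ} (hP : P.PosDef) (hQ : Q.PosDef)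
    (h : (Q - P).PosSemidef) : (P⁻¹ - Q⁻¹).PosSemidef := by
  set R := mpow Q (-(1/2)) with hR
  have hRd : R.PosDef := mpow_posDef hQ _
  have hRh : Rᴴ = R := hRd.isHermitian
  have hRQR : R * Q * R = 1 := by
    conv_lhs => rw [show Q = mpow Q 1 from (mpow_one hQ.isHermitian).symm]
    rw [hR, mpow_add hQ, mpow_add hQ]
    norm_num
    exact mpow_zero hQ.isHermitian
  have hG : (R * P * R).PosDef := posDef_conj hP hRd
  have h1 : (1 - R * P * R).PosSemidef := by
    have := loewner_conj h R
    rwa [hRh, hRQR] at this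
  have h2 := psd_inv_sub_one hG h1
  have h3 := loewner_conj h2 R
  have hRinv : R⁻¹ = mpow Q (1/2) := by
    rw [hR, mpow_inv hQ]; norm_num
  have hRR : R * R⁻¹ = 1 := Matrix.mul_nonsing_inv R hRd.det_pos.ne'.isUnit
  have hRRl : R⁻¹ * R = 1 := Matrix.nonsing_inv_mul R hRd.det_pos.ne'.isUnit
  have e1 : Rᴴ * (R * P * R)⁻¹ * R = P⁻¹ := by
    rw [hRh, Matrix.mul_inv_rev, Matrix.mul_inv_rev, ← mul_assoc, ← mul_assoc, hRR, one_mul,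
      mul_assoc, hRRl, mul_one]
  have e2 : Rᴴ * 1 * R = Q⁻¹ := by
    rw [hRh, mul_one, hR, mpow_add hQ, ← mpow_neg_one hQ]
    norm_num
  rw [e1, e2] at h3
  exact h3

lemma posDef_mulVec_ne_zero {K : Matrix m m ℂ} (hK : K.PosDef) {x : m → ℂ} (hx : x ≠ 0) :
    K *ᵥ x ≠ 0 := by
  intro h0
  apply hx
  have := congrArg (fun v => K⁻¹ *ᵥ v) h0
  simpa [Matrix.mulVec_mulVec, Matrix.nonsing_inv_mul K hK.det_pos.ne'.isUnit] using this

lemma mpow_mulVec_collapse {Q : Matrix m m ℂ} (hQ : Q.PosDef) (a b : ℝ) (x : m → ℂ) :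
    mpow Q a *ᵥ (mpow Q b *ᵥ x) = mpow Q (a + b) *ᵥ x := by
  rw [Matrix.mulVec_mulVec, mpow_add hQ]

lemma mpow_cancel_one {Q : Matrix m m ℂ} (hQ : Q.PosDef) (a : ℝ) :
    mpow Q a * mpow Q (-a) = 1 := by
  rw [mpow_add hQ]; simp [mpow_zero hQ.isHermitian]

lemma LH_midpoint {P Q : Matrix m m ℂ} (hP : P.PosDef) (hQ : Q.PosDef) {u v : ℝ}
    (hu : (mpow Q u - mpow P u).PosSemidef) (hv : (mpow Q v - mpow P v).PosSemidef) :
    (mpow Q ((u + v)/2) - mpow P ((u + v)/2)).PosSemidef := by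
  have hermQ : ∀ r : ℝ, (mpow Q r)ᴴ = mpow Q r := fun r => isHermitian_mpow hQ.isHermitian r
  have hermP : ∀ r : ℝ, (mpow P r)ᴴ = mpow P r := fun r => isHermitian_mpow hP.isHermitian r
  set w : ℝ := (u + v)/2 with hw
  have hPw := mpow_posDef hP w
  have hQw2 := mpow_posDef hQ (-(w/2))
  set G : Matrix m m ℂ := mpow Q (-(w/2)) * mpow P w * mpow Q (-(w/2)) with hGdef
  have hG : G.PosDef := posDef_conj hPw hQw2
  have heig : ∀ i, hG.isHermitian.eigenvalues i ≤ 1 := by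
    intro i
    set ρ : ℝ := hG.isHermitian.eigenvalues i with hρ
    have hρpos : 0 < ρ := hG.eigenvalues_pos i
    set x : m → ℂ := ⇑(hG.isHermitian.eigenvectorBasis i) with hx
    have hxne : x ≠ 0 := by
      intro h0
      have hz0 : (hG.isHermitian.eigenvectorBasis i : EuclideanSpace ℂ m) = 0 := by
        ext j; exact congrFun h0 j
      have hn := hG.isHermitian.eigenvectorBasis.orthonormal.1 i
      rw [hz0] at hn; simp at hn
    have hGx : G *ᵥ x = (ρ : ℂ) • x := by
      have := hG.isHermitian.mulVec_eigenvectorBasis i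
      convert this using 1
      ext j; simp [hρ, hx]
    set x' : m → ℂ := mpow Q (w/2) *ᵥ x with hx'
    have hx'ne : x' ≠ 0 := posDef_mulVec_ne_zero (mpow_posDef hQ _) hxne
    have h1 : mpow P w *ᵥ (mpow Q (-(w/2)) *ᵥ x) = (ρ:ℂ) • x' := by
      have e : G *ᵥ x = mpow Q (-(w/2)) *ᵥ (mpow P w *ᵥ (mpow Q (-(w/2)) *ᵥ x)) := by
        rw [Matrix.mulVec_mulVec, Matrix.mulVec_mulVec]
      have h2 := congrArg (fun y => mpow Q (w/2) *ᵥ y) (e.symm.trans hGx)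
      rw [Matrix.mulVec_mulVec, mpow_cancel_one hQ (w/2), Matrix.one_mulVec,
        Matrix.mulVec_smul] at h2
      exact h2
    have ha : mpow Q (-(w/2)) *ᵥ x = (ρ:ℂ) • (mpow P (-w) *ᵥ x') := by
      have h2 := congrArg (fun y => mpow P (-w) *ᵥ y) h1
      rw [Matrix.mulVec_mulVec, show mpow P (-w) * mpow P w = 1 from by
          simpa using mpow_cancel_one hP (-w), Matrix.one_mulVec, Matrix.mulVec_smul] at h2
      exact h2
    set z : m → ℂ := mpow P (-(u/2)) *ᵥ x' with hz
    have hzne : z ≠ 0 := posDef_mulVec_ne_zero (mpow_posDef hP _) hx'ne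
    set X' : Matrix m m ℂ := mpow P (v/2) * mpow Q (-(v/2)) with hX'
    set Y' : Matrix m m ℂ := mpow Q (-(u/2)) * mpow P (u/2) with hY'
    have hXYz : X' *ᵥ (Y' *ᵥ z) = (ρ:ℂ) • z := by
      have c1 : Y' *ᵥ z = mpow Q (-(u/2)) *ᵥ x' := by
        rw [hY', ← Matrix.mulVec_mulVec, hz, mpow_mulVec_collapse hP,
          show (u/2 + -(u/2) : ℝ) = 0 from by ring, mpow_zero hP.isHermitian, Matrix.one_mulVec]
      have c3 : mpow Q (-w) *ᵥ x' = mpow Q (-(w/2)) *ᵥ x := by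
        rw [hx', mpow_mulVec_collapse hQ, show (-w + w/2 : ℝ) = -(w/2) from by ring]
      have c2 : mpow Q (-(v/2)) *ᵥ (mpow Q (-(u/2)) *ᵥ x') = mpow Q (-(w/2)) *ᵥ x := by
        rw [mpow_mulVec_collapse hQ, show (-(v/2) + -(u/2) : ℝ) = -w from by rw [hw]; ring, c3]
      rw [c1, hX', ← Matrix.mulVec_mulVec, c2, ha, Matrix.mulVec_smul, Matrix.mulVec_mulVec,
        mpow_add hP, hz, show (v/2 + -w : ℝ) = -(u/2) from by rw [hw]; ring]
    have hX'c : (1 - X'ᴴ * X').PosSemidef := by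
      have hconj := loewner_conj hv (mpow Q (-(v/2)))
      rw [hermQ] at hconj
      have e1 : mpow Q (-(v/2)) * mpow Q v * mpow Q (-(v/2)) = 1 := by
        rw [mpow_add hQ, mpow_add hQ, show (-(v/2) + v + -(v/2) : ℝ) = 0 from by ring,
          mpow_zero hQ.isHermitian]
      have e2 : X'ᴴ * X' = mpow Q (-(v/2)) * mpow P v * mpow Q (-(v/2)) := by
        rw [hX', Matrix.conjTranspose_mul, hermQ, hermP, mul_assoc,
          ← mul_assoc (mpow P (v/2)), mpow_add hP, show (v/2 + v/2 : ℝ) = v from by ring,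
          ← mul_assoc]
      rwa [e1, ← e2] at hconj
    have hY'c : (1 - Y'ᴴ * Y').PosSemidef := by
      have hinv := inv_antitone (mpow_posDef hP u) (mpow_posDef hQ u) hu
      rw [mpow_inv hP, mpow_inv hQ] at hinv
      have hconj := loewner_conj hinv (mpow P (u/2))
      rw [hermP] at hconj
      have e1 : mpow P (u/2) * mpow P (-u) * mpow P (u/2) = 1 := by
        rw [mpow_add hP, mpow_add hP, show (u/2 + -u + u/2 : ℝ) = 0 from by ring,
          mpow_zero hP.isHermitian]
      have e2 : Y'ᴴ * Y' = mpow P (u/2) * mpow Q (-u) * mpow P (u/2) := by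
        rw [hY', Matrix.conjTranspose_mul, hermQ, hermP, mul_assoc,
          ← mul_assoc (mpow Q (-(u/2))), mpow_add hQ, show (-(u/2) + -(u/2) : ℝ) = -u from by ring,
          ← mul_assoc]
      rwa [e1, ← e2] at hconj
    have d1 := contraction_dot hX'c (Y' *ᵥ z)
    have d2 := contraction_dot hY'c z
    have hchain : star ((ρ:ℂ) • z) ⬝ᵥ ((ρ:ℂ) • z) ≤ star z ⬝ᵥ z := by
      rw [← hXYz]; exact le_trans d1 d2
    have hsm : star ((ρ:ℂ) • z) ⬝ᵥ ((ρ:ℂ) • z) = (ρ:ℂ) * ((ρ:ℂ) * (star z ⬝ᵥ z)) := by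
      rw [star_smul, smul_dotProduct, dotProduct_smul, smul_eq_mul, smul_eq_mul,
        Complex.star_def, Complex.conj_ofReal]
    rw [hsm] at hchain
    have hcpos : 0 < star z ⬝ᵥ z := Matrix.dotProduct_star_self_pos_iff.mpr hzne
    have hcre : 0 < (star z ⬝ᵥ z).re := (Complex.lt_def.mp hcpos).1
    have hcim : (star z ⬝ᵥ z).im = 0 := ((Complex.lt_def.mp hcpos).2).symm
    have hre := (Complex.le_def.mp hchain).1
    simp only [Complex.mul_re, Complex.ofReal_re, Complex.ofReal_im, hcim, mul_zero, zero_mul,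
      sub_zero] at hre
    have hsq : ρ * ρ ≤ 1 := by
      by_contra hgt
      push_neg at hgt
      nlinarith [hre, hcre]
    nlinarith [hsq, hρpos, sq_nonneg (ρ - 1)]
  have hone := one_sub_psd_of_eig_le_one hG.isHermitian heig
  have hc := loewner_conj hone (mpow Q (w/2))
  have eK1 : (mpow Q (w/2))ᴴ * 1 * mpow Q (w/2) = mpow Q w := by
    rw [hermQ, mul_one, mpow_add hQ, show (w/2 + w/2 : ℝ) = w from by ring]
  have eKG : (mpow Q (w/2))ᴴ * G * mpow Q (w/2) = mpow P w := by
    rw [hermQ, hGdef]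
    simp only [← mul_assoc]
    rw [mpow_add hQ, show (w/2 + -(w/2) : ℝ) = 0 from by ring, mpow_zero hQ.isHermitian, one_mul,
      mul_assoc, mpow_add hQ, show (-(w/2) + w/2 : ℝ) = 0 from by ring, mpow_zero hQ.isHermitian,
      mul_one]
  rwa [eK1, eKG] at hc

lemma psd_limit {f : ℕ → Matrix m m ℂ} {M : Matrix m m ℂ}
    (hf : ∀ k, (f k).PosSemidef) (hlim : Filter.Tendsto f Filter.atTop (nhds M)) :
    M.PosSemidef := by
  refine Matrix.PosSemidef.of_dotProduct_mulVec_nonneg ?_ ?_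
  · -- Hermitian
    ext i j
    have h1 : Filter.Tendsto (fun k => (f k)ᴴ i j) Filter.atTop (nhds (Mᴴ i j)) := by
      simp only [Matrix.conjTranspose_apply]
      exact (Complex.continuous_conj.tendsto _).comp
        (((continuous_id.matrix_elem j i).tendsto M).comp hlim)
    have h2 : Filter.Tendsto (fun k => (f k) i j) Filter.atTop (nhds (M i j)) :=
      ((continuous_id.matrix_elem i j).tendsto M).comp hlim
    have : (fun k => (f k)ᴴ i j) = fun k => (f k) i j := by
      ext k; rw [(hf k).isHermitian]
    rw [this] at h1
    exact tendsto_nhds_unique h1 h2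
  · intro x
    have hcont : Continuous (fun N : Matrix m m ℂ => star x ⬝ᵥ N *ᵥ x) :=
      continuous_const.dotProduct (continuous_id.matrix_mulVec continuous_const)
    have hg : Filter.Tendsto (fun k => star x ⬝ᵥ (f k) *ᵥ x) Filter.atTop
        (nhds (star x ⬝ᵥ M *ᵥ x)) := (hcont.tendsto M).comp hlim
    have hclosed : IsClosed {z : ℂ | 0 ≤ z} := by
      have : {z : ℂ | 0 ≤ z} = {z : ℂ | 0 ≤ z.re} ∩ {z : ℂ | z.im = 0} := by
        ext z
        simp only [Set.mem_setOf_eq, Set.mem_inter_iff, Complex.le_def]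
        constructor
        · rintro ⟨h1, h2⟩; exact ⟨by simpa using h1, by simpa using h2.symm⟩
        · rintro ⟨h1, h2⟩; exact ⟨by simpa using h1, by simp [h2]⟩
      rw [this]
      exact (isClosed_le continuous_const Complex.continuous_re).inter
        (isClosed_eq Complex.continuous_im continuous_const)
    exact hclosed.mem_of_tendsto hg (Filter.Eventually.of_forall fun k => (hf k).dotProduct_mulVec_nonneg x)

lemma continuous_mpow {A : Matrix m m ℂ} (hA : A.PosDef) :
    Continuous (fun r : ℝ => mpow A r) := by
  have h := hA.isHermitian
  have : (fun r : ℝ => mpow A r) = fun r =>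
      (h.eigenvectorUnitary : Matrix m m ℂ) *
        Matrix.diagonal (fun i => ((h.eigenvalues i ^ r : ℝ) : ℂ)) *
        star (h.eigenvectorUnitary : Matrix m m ℂ) := by
    ext r i j
    rw [mpow, dif_pos h]
  rw [this]
  apply Continuous.mul
  apply Continuous.mul continuous_const
  · apply Continuous.matrix_diagonal
    apply continuous_pi
    intro i
    apply Complex.continuous_ofReal.comp
    show Continuous (fun r : ℝ => h.eigenvalues i ^ r)
    have : (fun r : ℝ => h.eigenvalues i ^ r) =
        fun r => Real.exp (Real.log (h.eigenvalues i) * r) := by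
      ext r
      rw [Real.rpow_def_of_pos (hA.eigenvalues_pos i)]
    rw [this]
    exact Real.continuous_exp.comp (continuous_const.mul continuous_id)
  · exact continuous_const

lemma LH_dyadic {P Q : Matrix m m ℂ} (hP : P.PosDef) (hQ : Q.PosDef)
    (h : (Q - P).PosSemidef) :
    ∀ (M k : ℕ), k ≤ 2^M → (mpow Q ((k : ℝ)/2^M) - mpow P ((k : ℝ)/2^M)).PosSemidef := by
  intro M
  induction M with
  | zero =>
      intro k hk
      interval_cases k
      · simpa [mpow_zero hP.isHermitian, mpow_zero hQ.isHermitian] using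
          (Matrix.PosSemidef.zero (n := m) (R := ℂ))
      · simpa [mpow_one hP.isHermitian, mpow_one hQ.isHermitian] using h
  | succ M ih =>
      intro k hk
      set a := k / 2 with hadef
      set b := k - k / 2 with hbdef
      have hab : a + b = k := by omega
      have ha : a ≤ 2^M := by omega
      have hb : b ≤ 2^M := by omega
      have hmid := LH_midpoint hP hQ (ih b hb) (ih a ha)
      have : (((a : ℝ)/2^M + (b:ℝ)/2^M)/2 : ℝ) = (k:ℝ)/2^(M+1) := by
        have hcast : ((a : ℝ) + b) = (k : ℝ) := by exact_mod_cast congrArg (Nat.cast : ℕ → ℝ) hab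
        rw [← add_div, div_div, hcast, pow_succ]
      rw [show ((b:ℝ)/2^M + (a:ℝ)/2^M)/2 = ((a:ℝ)/2^M + (b:ℝ)/2^M)/2 from by ring, this] at hmid
      exact hmid

lemma loewner_heinz {P Q : Matrix m m ℂ} (hP : P.PosDef) (hQ : Q.PosDef)
    (h : (Q - P).PosSemidef) {t : ℝ} (ht : t ∈ Set.Icc (0:ℝ) 1) :
    (mpow Q t - mpow P t).PosSemidef := by
  obtain ⟨ht0, ht1⟩ := ht
  set c : ℕ → ℝ := fun M => ((⌊t * 2^M⌋₊ : ℕ) : ℝ)/2^M with hc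
  have hck : ∀ M : ℕ, (mpow Q (c M) - mpow P (c M)).PosSemidef := by
    intro M
    apply LH_dyadic hP hQ h M
    have h1 : t * 2^M ≤ (2:ℝ)^M := by nlinarith [pow_pos (by norm_num : (0:ℝ) < 2) M]
    calc ⌊t * 2^M⌋₊ ≤ ⌊((2^M : ℕ) : ℝ)⌋₊ := Nat.floor_mono (by push_cast; linarith)
      _ = 2^M := Nat.floor_natCast _
  have hclim : Filter.Tendsto c Filter.atTop (nhds t) := by
    have hup : ∀ M, c M ≤ t := by
      intro M
      rw [hc]
      have := Nat.floor_le (by positivity : 0 ≤ t * 2^M)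
      rw [div_le_iff₀ (by positivity)]
      linarith
    have hlow : ∀ M, t - (1/2)^M ≤ c M := by
      intro M
      rw [hc]
      have := Nat.lt_floor_add_one (t * 2^M)
      rw [sub_le_iff_le_add, div_add' _ _ _ (by positivity : ((2:ℝ)^M) ≠ 0)]
      rw [le_div_iff₀ (by positivity)]
      have : (1/2:ℝ)^M * 2^M = 1 := by
        rw [← mul_pow]; norm_num
      nlinarith [Nat.lt_floor_add_one (t * 2^M)]
    have htend : Filter.Tendsto (fun M : ℕ => t - (1/2:ℝ)^M) Filter.atTop (nhds t) := by
      have : Filter.Tendsto (fun M : ℕ => (1/2:ℝ)^M) Filter.atTop (nhds 0) :=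
        tendsto_pow_atTop_nhds_zero_of_lt_one (by norm_num) (by norm_num)
      simpa using (tendsto_const_nhds (x := t)).sub this
    exact tendsto_of_tendsto_of_tendsto_of_le_of_le htend tendsto_const_nhds hlow hup
  have hmlim : Filter.Tendsto (fun M => mpow Q (c M) - mpow P (c M)) Filter.atTop
      (nhds (mpow Q t - mpow P t)) :=
    (((continuous_mpow hQ).tendsto t).comp hclim).sub (((continuous_mpow hP).tendsto t).comp hclim)
  exact psd_limit hck hmlim

lemma self_mul_mpow_mul_self {C : Matrix m m ℂ} (hC : C.PosDef) (a : ℝ) :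
    C * mpow C a * C = mpow C (1 + a + 1) := by
  nth_rewrite 1 3 [← mpow_one hC.isHermitian]
  rw [mpow_add hC, mpow_add hC]

end Helpers

/-- t-metric geometric mean `A ♯ₜ B`. -/
noncomputable def msharp {m : Type*} [Fintype m] [DecidableEq m]
    (A B : Matrix m m ℂ) (t : ℝ) : Matrix m m ℂ :=
  mpow A (1/2) * mpow (mpow A (-(1/2)) * B * mpow A (-(1/2))) t * mpow A (1/2)

/-- t-spectral geometric mean `A ♮ₜ B`. -/
noncomputable def mnat {m : Type*} [Fintype m] [DecidableEq m]
    (A B : Matrix m m ℂ) (t : ℝ) : Matrix m m ℂ :=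
  mpow (msharp A⁻¹ B (1/2)) t * A * mpow (msharp A⁻¹ B (1/2)) t

/-- Eigenvalues in non-increasing order (junk value `0` if not Hermitian). -/
noncomputable def eigsDesc {n : ℕ} (A : Matrix (Fin n) (Fin n) ℂ) : Fin n → ℝ :=
  if h : A.IsHermitian then (fun i => h.eigenvalues (Tuple.sort h.eigenvalues i.rev)) else 0

/-- `x` is log-majorized by `y` (both listed in non-increasing order). -/
def LogMaj {n : ℕ} (x y : Fin n → ℝ) : Prop :=
  (∀ k : ℕ, ∏ i ∈ Finset.univ.filter (fun i : Fin n => (i : ℕ) < k), x i ≤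
      ∏ i ∈ Finset.univ.filter (fun i : Fin n => (i : ℕ) < k), y i) ∧
    ∏ i, x i = ∏ i, y i

/-- k-th compound matrix. -/
noncomputable def compound {n : ℕ} (k : ℕ) (A : Matrix (Fin n) (Fin n) ℂ) :
    Matrix {s : Finset (Fin n) // s.card = k} {s : Finset (Fin n) // s.card = k} ℂ :=
  fun s t => (A.submatrix (fun i => (s.1.orderIsoOfFin s.2 i : Fin n))
    (fun i => (t.1.orderIsoOfFin t.2 i : Fin n))).det


theorem msharp_le_one_of_mnat_le_one {n : ℕ} (A B : Matrix (Fin n) (Fin n) ℂ)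
    (hA : A.PosDef) (hB : B.PosDef) (t : ℝ) (ht : t ∈ Set.Icc (0:ℝ) 1)
    (h : ((1 : Matrix (Fin n) (Fin n) ℂ) - mnat A B t).PosSemidef) :
    ((1 : Matrix (Fin n) (Fin n) ℂ) - msharp A B t).PosSemidef := by
  have hAinv : A⁻¹.PosDef := hA.inv
  set T : Matrix (Fin n) (Fin n) ℂ := mpow A⁻¹ (-(1/2)) with hTdef
  set S : Matrix (Fin n) (Fin n) ℂ := mpow A⁻¹ (1/2) with hSdef
  have hT : T.PosDef := mpow_posDef hAinv _
  have hS : S.PosDef := mpow_posDef hAinv _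
  have hTBT : (T * B * T).PosDef := posDef_conj hB hT
  set R : Matrix (Fin n) (Fin n) ℂ := mpow (T * B * T) (1/2) with hRdef
  have hR : R.PosDef := mpow_posDef hTBT _
  set C : Matrix (Fin n) (Fin n) ℂ := msharp A⁻¹ B (1/2) with hCdef
  have hCeq : C = S * R * S := by rw [hCdef, msharp]
  have hC : C.PosDef := by rw [hCeq]; exact posDef_conj hR hS
  have hermC : Cᴴ = C := hC.isHermitian
  have hAeq : mpow A⁻¹ (-1) = A := by
    rw [mpow_neg_one hAinv, Matrix.nonsing_inv_nonsing_inv A hA.det_pos.ne'.isUnit]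
  have hSAS : S * A * S = 1 := by
    rw [← hAeq, hSdef, mpow_add hAinv, mpow_add hAinv,
      show (1/2 + -1 + 1/2 : ℝ) = 0 from by ring, mpow_zero hAinv.isHermitian]
  have hST : S * T = 1 := by
    rw [hSdef, hTdef, mpow_add hAinv, show (1/2 + -(1/2) : ℝ) = 0 from by ring,
      mpow_zero hAinv.isHermitian]
  have hTS : T * S = 1 := by
    rw [hSdef, hTdef, mpow_add hAinv, show (-(1/2) + 1/2 : ℝ) = 0 from by ring,
      mpow_zero hAinv.isHermitian]
  have hRR : R * R = T * B * T := by
    rw [hRdef, mpow_add hTBT, show (1/2 + 1/2 : ℝ) = 1 from by ring, mpow_one hTBT.isHermitian]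
  -- Riccati equation
  have hRic : C * A * C = B := by
    rw [hCeq]
    have e1 : S * R * S * A * (S * R * S) = S * (R * ((S * A * S) * (R * S))) := by
      simp only [mul_assoc]
    rw [e1, hSAS, one_mul]
    have e2 : S * (R * (R * S)) = (S * (R * R)) * S := by simp only [mul_assoc]
    rw [e2, hRR]
    have e3 : S * (T * B * T) * S = (S * T) * B * (T * S) := by simp only [mul_assoc]
    rw [e3, hST, hTS, one_mul, mul_one]
  -- hypothesis: A ≤ C^{-2t}
  have hmnat : mnat A B t = mpow C t * A * mpow C t := by rw [mnat]
  rw [hmnat] at h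
  have hconj1 := loewner_conj h (mpow C (-t))
  rw [isHermitian_mpow hC.isHermitian (-t)] at hconj1
  have e4 : mpow C (-t) * 1 * mpow C (-t) = mpow C (-t + -t) := by
    rw [mul_one, mpow_add hC]
  have e5 : mpow C (-t) * (mpow C t * A * mpow C t) * mpow C (-t) = A := by
    have e : mpow C (-t) * (mpow C t * A * mpow C t) * mpow C (-t) =
        (mpow C (-t) * mpow C t) * A * (mpow C t * mpow C (-t)) := by simp only [mul_assoc]
    rw [e, mpow_add hC, mpow_add hC, show (-t + t : ℝ) = 0 from by ring,
      show (t + -t : ℝ) = 0 from by ring, mpow_zero hC.isHermitian, one_mul, mul_one]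
  rw [e4, e5] at hconj1
  -- B ≤ C^{2-2t}
  have hconj2 := loewner_conj hconj1 C
  rw [hermC, self_mul_mpow_mul_self hC, hRic] at hconj2
  -- A⁻¹ ≥ C^{2t}
  have hinv1 := inv_antitone hA (mpow_posDef hC (-t + -t)) hconj1
  rw [mpow_inv hC, show (-(-t + -t) : ℝ) = t + t from by ring] at hinv1
  -- setup D, E
  set T' : Matrix (Fin n) (Fin n) ℂ := mpow A (-(1/2)) with hT'def
  have hT' : T'.PosDef := mpow_posDef hA _
  have hermT' : T'ᴴ = T' := hT'.isHermitian
  set H : Matrix (Fin n) (Fin n) ℂ := mpow A (1/2) with hHdef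
  have hH : H.PosDef := mpow_posDef hA _
  have hermH : Hᴴ = H := hH.isHermitian
  have hHT' : H * T' = 1 := by
    rw [hHdef, hT'def, mpow_add hA, show (1/2 + -(1/2) : ℝ) = 0 from by ring,
      mpow_zero hA.isHermitian]
  have hT'H : T' * H = 1 := by
    rw [hHdef, hT'def, mpow_add hA, show (-(1/2) + 1/2 : ℝ) = 0 from by ring,
      mpow_zero hA.isHermitian]
  have hT'T' : T' * T' = A⁻¹ := by
    rw [hT'def, mpow_add hA, show (-(1/2) + -(1/2) : ℝ) = -1 from by ring, mpow_neg_one hA]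
  set D : Matrix (Fin n) (Fin n) ℂ := T' * B * T' with hDdef
  have hD : D.PosDef := posDef_conj hB hT'
  set s : ℝ := 1 - t with hsdef
  have hs01 : s ∈ Set.Icc (0:ℝ) 1 := ⟨by simp [hsdef]; linarith [ht.2], by simp [hsdef]; linarith [ht.1]⟩
  set E : Matrix (Fin n) (Fin n) ℂ := T' * mpow C (1 + (-t + -t) + 1) * T' with hEdef
  have hE : E.PosDef := posDef_conj (mpow_posDef hC _) hT'
  have hDE : (E - D).PosSemidef := by
    have := loewner_conj hconj2 T'
    rwa [hermT'] at this
  -- Loewner-Heinz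
  have hDEt := loewner_heinz hD hE hDE ht
  have hconj3 := loewner_conj hDEt H
  rw [hermH] at hconj3
  -- identify msharp
  have hsharp : msharp A B t = H * mpow D t * H := by rw [msharp]
  -- bound H E^t H ≤ 1
  set Y : Matrix (Fin n) (Fin n) ℂ := T' * mpow C s with hYdef
  have hYH : Yᴴ = mpow C s * T' := by
    rw [hYdef, Matrix.conjTranspose_mul, hermT', isHermitian_mpow hC.isHermitian]
  have hEYY : E = Y * Yᴴ := by
    rw [hYH, hYdef, hEdef]
    have e : T' * mpow C s * (mpow C s * T') = T' * (mpow C s * mpow C s) * T' := by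
      simp only [mul_assoc]
    rw [e, mpow_add hC, show (s + s : ℝ) = 1 + (-t + -t) + 1 from by rw [hsdef]; ring]
  set F : Matrix (Fin n) (Fin n) ℂ := mpow C s * A⁻¹ * mpow C s with hFdef
  have hF : F.PosDef := posDef_conj hAinv (mpow_posDef hC s)
  have hYY : Yᴴ * Y = F := by
    rw [hYH, hYdef, hFdef]
    have e : mpow C s * T' * (T' * mpow C s) = mpow C s * (T' * T') * mpow C s := by
      simp only [mul_assoc]
    rw [e, hT'T']
  -- H E^t H = C^s F^{t-1} C^s
  have hEt : mpow E t = Y * mpow F (t - 1) * Yᴴ := by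
    have e1 : mpow E t = mpow E (t - 1) * mpow E 1 := by
      rw [mpow_add hE, show (t - 1 + 1 : ℝ) = t from by ring]
    rw [e1, mpow_one hE.isHermitian, hEYY, ← mul_assoc, mpow_mul_comm Y (t - 1), hYY]
  have hHEH : H * mpow E t * H = mpow C s * mpow F (t - 1) * mpow C s := by
    rw [hEt, hYdef, hYH]
    have e : H * (T' * mpow C s * mpow F (t - 1) * (mpow C s * T')) * H =
        (H * T') * (mpow C s * mpow F (t - 1) * mpow C s) * (T' * H) := by
      simp only [mul_assoc]
    rw [e, hHT', hT'H, one_mul, mul_one]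
  -- C^2 ≤ F
  have hconj4 := loewner_conj hinv1 (mpow C s)
  rw [isHermitian_mpow hC.isHermitian s] at hconj4
  have e6 : mpow C s * mpow C (t + t) * mpow C s = mpow C 2 := by
    rw [mpow_add hC, mpow_add hC, show (s + (t + t) + s : ℝ) = 2 from by rw [hsdef]; ring]
  rw [e6] at hconj4
  -- F^s ≥ C^{2s}
  have hFs := loewner_heinz (mpow_posDef hC 2) hF hconj4 hs01
  rw [mpow_mpow hC 2 s] at hFs
  -- invert
  have hinv2 := inv_antitone (mpow_posDef hC (2*s)) (mpow_posDef hF s) hFs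
  rw [mpow_inv hC, mpow_inv hF] at hinv2
  -- conjugate by C^s
  have hconj5 := loewner_conj hinv2 (mpow C s)
  rw [isHermitian_mpow hC.isHermitian s] at hconj5
  have e7 : mpow C s * mpow C (-(2*s)) * mpow C s = 1 := by
    rw [mpow_add hC, mpow_add hC, show (s + -(2*s) + s : ℝ) = 0 from by ring,
      mpow_zero hC.isHermitian]
  rw [e7] at hconj5
  have hfinal1 : (1 - H * mpow E t * H).PosSemidef := by
    rw [hHEH, show (t - 1 : ℝ) = -s from by rw [hsdef]; ring]
    exact hconj5
  -- combine
  rw [hsharp]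
  have e8 : (1 : Matrix (Fin n) (Fin n) ℂ) - H * mpow D t * H =
      (1 - H * mpow E t * H) + (H * mpow E t * H - H * mpow D t * H) := by
    rw [sub_add_sub_cancel]
  rw [e8]
  exact hfinal1.add hconj3
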